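/- Let a > b be positive integers. Then the step count S_m(a,b) of the method of least absolute remainders is less than or equal to the step count S(a,b) of any generalized Euclidean algorithm applied to (a,b). -/
import Mathlib


/-- A generalized Euclidean algorithm on the pair `(a, b)`:
a sequence of equations `x (i-1) = x i * p i + ε (i+1) * x (i+1)` for `i = 1, …, m`,
with positive quotients `p i`, signs `ε i = ±1`, strictly decreasing positive
remainders, and final remainder `x (m+1) = 0`. -/
structure GenEuclid (a b : ℕ) where
  m : ℕ
  x : ℕ → ℕ
  p : ℕ → ℕ
  ε : ℕ → ℤ
  hm : 1 ≤ m
  hx0 : x 0 = a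
  hx1 : x 1 = b
  hxm1 : x (m + 1) = 0
  hpos : ∀ i, i ≤ m → 0 < x i
  hdec : ∀ i, 1 ≤ i → i ≤ m → x (i + 1) < x i
  hp : ∀ i, 1 ≤ i → i ≤ m → 1 ≤ p i
  hε : ∀ i, 2 ≤ i → i ≤ m → ε i = 1 ∨ ε i = -1
  heq : ∀ i, 1 ≤ i → i ≤ m → (x (i - 1) : ℤ) = x i * p i + ε (i + 1) * x (i + 1)

/-- The step count of a generalized Euclidean algorithm:
the sum of all quotients (total subtractions) plus the number of divisions minus one
(the swaps). -/
def GenEuclid.steps {a b : ℕ} (E : GenEuclid a b) : ℕ :=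
  (E.m - 1) + ∑ i ∈ Finset.Icc 1 E.m, E.p i

/-- The regular Euclidean algorithm: all remainders are taken with sign `+1`. -/
def GenEuclid.IsRegular {a b : ℕ} (E : GenEuclid a b) : Prop :=
  ∀ i, 2 ≤ i → i ≤ E.m → E.ε i = 1

/-- The method of least absolute remainders: at each division the remainder of least
absolute value is chosen, i.e. `2 * x (i+1) ≤ x i`, with ties (remainder exactly half
the divisor) broken in favor of the positive remainder. -/
def GenEuclid.IsLAR {a b : ℕ} (E : GenEuclid a b) : Prop :=
  ∀ i, 1 ≤ i → i ≤ E.m →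
    2 * E.x (i + 1) ≤ E.x i ∧ (2 * E.x (i + 1) = E.x i → E.ε (i + 1) = 1)

/-- The method of least absolute remainders (no tie-breaking condition):
at every step `2 * x (i+1) ≤ x i`. -/
def GenEuclid.IsLAR' {a b : ℕ} (E : GenEuclid a b) : Prop :=
  ∀ i, 1 ≤ i → i ≤ E.m → 2 * E.x (i + 1) ≤ E.x i

def GenEuclid.tail {a b : ℕ} (E : GenEuclid a b) (h2 : 2 ≤ E.m) : GenEuclid b (E.x 2) where
  m := E.m - 1
  x := fun i => E.x (i + 1)
  p := fun i => E.p (i + 1)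
  ε := fun i => E.ε (i + 1)
  hm := by omega
  hx0 := E.hx1
  hx1 := rfl
  hxm1 := by show E.x (E.m - 1 + 1 + 1) = 0; rw [show E.m - 1 + 1 + 1 = E.m + 1 by omega]; exact E.hxm1
  hpos := fun i hi => E.hpos (i + 1) (by omega)
  hdec := fun i h1 hi => E.hdec (i + 1) (by omega) (by omega)
  hp := fun i h1 hi => E.hp (i + 1) (by omega) (by omega)
  hε := fun i h1 hi => E.hε (i + 1) (by omega) (by omega)
  heq := fun i h1 hi => by
    have h := E.heq (i + 1) (by omega) (by omega)
    rw [show i + 1 - 1 = i - 1 + 1 by omega] at h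
    exact h

lemma sum_shift {a b : ℕ} (E : GenEuclid a b) (h2 : 2 ≤ E.m) :
    ∑ i ∈ Finset.Icc 1 (E.m - 1), E.p (i + 1) = ∑ i ∈ Finset.Icc 2 E.m, E.p i := by
  have h := Finset.sum_map (Finset.Icc 1 (E.m - 1)) (addRightEmbedding 1) E.p
  rw [Finset.map_add_right_Icc, show E.m - 1 + 1 = E.m by omega] at h
  simpa [addRightEmbedding] using h.symm

lemma tail_steps {a b : ℕ} (E : GenEuclid a b) (h2 : 2 ≤ E.m) :
    E.steps = (E.tail h2).steps + 1 + E.p 1 := by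
  unfold GenEuclid.steps
  have hsplit : ∑ i ∈ Finset.Icc 1 E.m, E.p i
      = E.p 1 + ∑ i ∈ Finset.Icc 2 E.m, E.p i := by
    rw [← Finset.sum_erase_add _ _ (Finset.mem_Icc.mpr ⟨le_rfl, E.hm⟩),
      Finset.Icc_erase_left, ← Finset.Icc_add_one_left_eq_Ioc]
    ring
  have ht : (E.tail h2).m = E.m - 1 := rfl
  have htp : ∑ i ∈ Finset.Icc 1 (E.tail h2).m, (E.tail h2).p i
      = ∑ i ∈ Finset.Icc 2 E.m, E.p i := by
    rw [ht, ← sum_shift E h2]; rfl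
  rw [hsplit, htp, ht]
  omega

lemma tail_isLAR {a b : ℕ} (E : GenEuclid a b) (h2 : 2 ≤ E.m) (hL : E.IsLAR) :
    (E.tail h2).IsLAR := fun i h1 hi => hL (i + 1) (by omega) (by have hh : (E.tail h2).m = E.m - 1 := rfl; omega)


def S (a b : ℕ) : ℕ :=
  if hb : b = 0 then 0
  else
    if 2 * (a % b) ≤ b then
      a / b + (if a % b = 0 then 0 else 1 + S b (a % b))
    else
      (a / b + 1) + (1 + S b (b - a % b))
termination_by b
decreasing_by
  · exact Nat.mod_lt _ (Nat.pos_of_ne_zero hb)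
  · exact Nat.sub_lt (Nat.pos_of_ne_zero hb) (by omega)

lemma S_pos_eq (a b : ℕ) (hb : 0 < b) :
    S a b = if 2 * (a % b) ≤ b then
      a / b + (if a % b = 0 then 0 else 1 + S b (a % b))
    else
      (a / b + 1) + (1 + S b (b - a % b)) := by
  rw [S]; simp [hb.ne']

lemma S_shift (e d : ℕ) (hd : 0 < d) : S (e + d) d = S e d + 1 := by
  rw [S_pos_eq _ _ hd, S_pos_eq e _ hd, Nat.add_mod_right, Nat.add_div_right _ hd]
  split
  · split <;> omega
  · omega

lemma S_M : ∀ b, ∀ c, 0 < c → 2 * c < b → S b c + 1 ≤ S b (b - c) := by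
  intro b
  induction b using Nat.strong_induction_on with
  | _ b IH =>
    intro c hc hcb
    have hbc : 0 < b - c := by omega
    have h1 : b % (b - c) = c := by
      rw [Nat.mod_eq_sub_mod (by omega), show b - (b - c) = c by omega]
      exact Nat.mod_eq_of_lt (by omega)
    have h2 : b / (b - c) = 1 :=
      Nat.div_eq_of_lt_le (by omega) (by omega)
    rw [S_pos_eq b (b - c) hbc, h1, h2]
    by_cases h3 : 2 * c ≤ b - c
    · -- 3c ≤ b
      rw [if_pos h3, if_neg hc.ne']
      have hs : S b c = S (b - c) c + 1 := by
        have h := S_shift (b - c) c hc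
        rwa [show b - c + c = b by omega] at h
      omega
    · -- 2c < b < 3c
      rw [if_neg h3]
      set d := b - 2 * c with hdd
      have hd : b - c - c = d := by omega
      rw [hd]
      have hd0 : 0 < d := by omega
      have hdc : d < c := by omega
      have hshift : S (b - c) d = S c d + 1 := by
        have h := S_shift c d hd0
        rwa [show c + d = b - c by omega] at h
      rw [hshift]
      have hq : b / c = 2 := Nat.div_eq_of_lt_le (by omega) (by omega)
      have hm : b % c = d := by
        have h := Nat.div_add_mod b c
        rw [hq] at h
        omega
      rw [S_pos_eq b c hc, hm, hq]
      by_cases h4 : 2 * d ≤ c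
      · rw [if_pos h4, if_neg hd0.ne']
        omega
      · rw [if_neg h4]
        have hI := IH c (by omega) (c - d) (by omega) (by omega)
        rw [show c - (c - d) = d by omega] at hI
        omega

lemma S_div (b p s : ℕ) (hb : 0 < b) (hs : s < b) :
    (b * p + s) % b = s ∧ (b * p + s) / b = p := by
  constructor
  · rw [Nat.mul_add_mod]; exact Nat.mod_eq_of_lt hs
  · rw [Nat.mul_add_div hb, Nat.div_eq_of_lt hs]; omega

lemma S_K (a b p c : ℕ) (hb : 0 < b) (hc : 0 < c) (hcb : c < b)
    (hp : 1 ≤ p) (h : a = b * p + c ∨ a + c = b * p) :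
    S a b ≤ p + 1 + S b c := by
  rcases h with h | h
  · obtain ⟨hmod, hdiv⟩ := S_div b p c hb hcb
    rw [h, S_pos_eq _ _ hb, hmod, hdiv]
    by_cases h2 : 2 * c ≤ b
    · rw [if_pos h2, if_neg hc.ne']; omega
    · rw [if_neg h2]
      have hM := S_M b (b - c) (by omega) (by omega)
      rw [show b - (b - c) = c by omega] at hM
      omega
  · obtain ⟨q, rfl⟩ : ∃ q, p = q + 1 := ⟨p - 1, by omega⟩
    have ha : a = b * q + (b - c) := by
      have hh : b * (q + 1) = b * q + b := by ring
      omega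
    obtain ⟨hmod, hdiv⟩ := S_div b q (b - c) hb (by omega)
    rw [ha, S_pos_eq _ _ hb, hmod, hdiv]
    by_cases h2 : 2 * (b - c) ≤ b
    · rw [if_pos h2, if_neg (by omega : ¬ b - c = 0)]
      by_cases h3 : 2 * (b - c) = b
      · rw [show b - c = c by omega]
        omega
      · have hM := S_M b (b - c) (by omega) (by omega)
        rw [show b - (b - c) = c by omega] at hM
        omega
    · rw [if_neg h2, show b - (b - c) = c by omega]
      omega

lemma S_mul (a b p : ℕ) (hb : 0 < b) (h : a = b * p) : S a b = p := by
  subst h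
  obtain ⟨hmod, hdiv⟩ := S_div b p 0 hb hb
  rw [Nat.add_zero] at hmod hdiv
  rw [S_pos_eq _ _ hb, hmod, hdiv, if_pos (by omega), if_pos rfl]
  omega

lemma S_step_pos (a b p c : ℕ) (hb : 0 < b) (hc : 0 < c) (hcb : c < b)
    (h2 : 2 * c ≤ b) (h : a = b * p + c) : S a b = p + (1 + S b c) := by
  subst h
  obtain ⟨hmod, hdiv⟩ := S_div b p c hb hcb
  rw [S_pos_eq _ _ hb, hmod, hdiv, if_pos h2, if_neg hc.ne']

lemma S_step_neg (a b p c : ℕ) (hb : 0 < b) (hc : 0 < c) (htie : 2 * c < b)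
    (hp : 1 ≤ p) (h : a + c = b * p) : S a b = p + (1 + S b c) := by
  obtain ⟨q, hq⟩ : ∃ q, p = q + 1 := ⟨p - 1, by omega⟩
  subst hq
  have ha : a = b * q + (b - c) := by
    have hh : b * (q + 1) = b * q + b := by ring
    omega
  subst ha
  obtain ⟨hmod, hdiv⟩ := S_div b q (b - c) hb (by omega)
  rw [S_pos_eq _ _ hb, hmod, hdiv, if_neg (by omega), show b - (b - c) = c by omega]

lemma steps_one {a b : ℕ} (E : GenEuclid a b) (hm1 : E.m = 1) : E.steps = E.p 1 := by
  unfold GenEuclid.steps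
  rw [hm1]
  simp

lemma first_eq {a b : ℕ} (E : GenEuclid a b) :
    (a : ℤ) = b * E.p 1 + E.ε 2 * E.x 2 := by
  have h := E.heq 1 le_rfl E.hm
  rw [show (1 : ℕ) - 1 = 0 from rfl, E.hx0, E.hx1] at h
  exact h

lemma case_m1 {a b : ℕ} (E : GenEuclid a b) (hm1 : E.m = 1) : a = b * E.p 1 := by
  have hx2 : E.x 2 = 0 := by rw [show 2 = E.m + 1 by omega]; exact E.hxm1
  have h := first_eq E
  rw [hx2] at h
  norm_num at h
  exact_mod_cast h

lemma key_eq {a b : ℕ} (E : GenEuclid a b) (hm2 : 2 ≤ E.m) :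
    a = b * E.p 1 + E.x 2 ∨ a + E.x 2 = b * E.p 1 := by
  have h := first_eq E
  rcases E.hε 2 le_rfl hm2 with hε | hε <;> rw [hε] at h
  · left
    exact_mod_cast (by linarith : (a : ℤ) = (b : ℤ) * E.p 1 + E.x 2)
  · right
    exact_mod_cast (by linarith : (a : ℤ) + E.x 2 = (b : ℤ) * E.p 1)

lemma lower : ∀ b a : ℕ, 0 < b → ∀ E : GenEuclid a b, S a b ≤ E.steps := by
  intro b
  induction b using Nat.strong_induction_on with
  | _ b IH =>
    intro a hb E
    by_cases hm2 : 2 ≤ E.m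
    · have hc : 0 < E.x 2 := E.hpos 2 hm2
      have hcb : E.x 2 < b := by
        have h := E.hdec 1 le_rfl E.hm
        rwa [E.hx1] at h
      have hp1 : 1 ≤ E.p 1 := E.hp 1 le_rfl E.hm
      have h1 : S a b ≤ E.p 1 + 1 + S b (E.x 2) :=
        S_K a b (E.p 1) (E.x 2) hb hc hcb hp1 (key_eq E hm2)
      have h2 : S b (E.x 2) ≤ (E.tail hm2).steps := IH (E.x 2) hcb b hc _
      rw [tail_steps E hm2]
      omega
    · have hm1 : E.m = 1 := by have := E.hm; omega
      rw [S_mul a b (E.p 1) hb (case_m1 E hm1), steps_one E hm1]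

lemma upper : ∀ b a : ℕ, 0 < b → ∀ L : GenEuclid a b, L.IsLAR → L.steps ≤ S a b := by
  intro b
  induction b using Nat.strong_induction_on with
  | _ b IH =>
    intro a hb L hL
    by_cases hm2 : 2 ≤ L.m
    · have hc : 0 < L.x 2 := L.hpos 2 hm2
      have hcb : L.x 2 < b := by
        have h := L.hdec 1 le_rfl L.hm
        rwa [L.hx1] at h
      have hp1 : 1 ≤ L.p 1 := L.hp 1 le_rfl L.hm
      have hlar := hL 1 le_rfl L.hm
      rw [L.hx1] at hlar
      have hIH : (L.tail hm2).steps ≤ S b (L.x 2) :=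
        IH (L.x 2) hcb b hc _ (tail_isLAR L hm2 hL)
      rw [tail_steps L hm2]
      rcases key_eq L hm2 with h | h
      · rw [S_step_pos a b (L.p 1) (L.x 2) hb hc hcb hlar.1 h]
        omega
      · have hε : L.ε 2 = -1 := by
          rcases L.hε 2 le_rfl hm2 with hε | hε
          · exfalso
            have h' := first_eq L
            rw [hε] at h'
            have hx : a = b * L.p 1 + L.x 2 :=
              by exact_mod_cast (by linarith : (a : ℤ) = (b : ℤ) * L.p 1 + L.x 2)
            omega
          · exact hε
        have htie : 2 * L.x 2 < b := by
          rcases lt_or_eq_of_le hlar.1 with h' | h'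
          · exact h'
          · have hcon := hlar.2 h'
            rw [hε] at hcon
            norm_num at hcon
        rw [S_step_neg a b (L.p 1) (L.x 2) hb hc htie hp1 h]
        omega
    · have hm1 : L.m = 1 := by have := L.hm; omega
      rw [S_mul a b (L.p 1) hb (case_m1 L hm1), steps_one L hm1]

/-- For positive integers `a > b`, the step count of the method of least absolute
remainders on `(a, b)` is at most the step count of any generalized Euclidean
algorithm on `(a, b)`. -/
theorem lar_steps_min (a b : ℕ) (hb : 0 < b) (hba : b < a)
    (L E : GenEuclid a b) (hL : L.IsLAR) :
    L.steps ≤ E.steps :=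
  le_trans (upper b a hb L hL) (lower b a hb E)
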